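/- Let Δ : sequences → sequences satisfy the VSP inequality ⟨u, y⟩_T ≥ δ‖u‖²_{2T} + ε‖y‖²_{2T} for all T, where y = Δ(u), δ = mL/(m+L), ε = 1/(m+L), 0 < m ≤ L. Let 0 < D < 1/L and define the positive-feedback interconnection Δ̄ mapping ū to y via u = ū + D·y, y = Δ(u). Then Δ̄ is VSP with constants δ̄ = δ/(1 - 2δD) > 0 and ε̄ = (ε - D + δD²)/(1 - 2δD) > 0: for all T, ⟨ū, y⟩_T ≥ δ̄‖ū‖²_{2T} + ε̄‖y‖²_{2T}. -/
import Mathlib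


open scoped RealInnerProductSpace

/-- Positive feedback of a VSP system `Δ` (with sector constants `δ = mL/(m+L)`,
`ε = 1/(m+L)`) with gain `D·I`, `0 < D < 1/L`, yields a VSP system `Δ̄` with
`δ̄ = δ/(1-2δD)` and `ε̄ = (ε - D + δD²)/(1-2δD)`. -/
theorem stmt_7 {n : ℕ} (m L D : ℝ) (hm : 0 < m) (hmL : m ≤ L)
    (hD0 : 0 < D) (hD : D < 1 / L)
    (Δ : (ℕ → EuclideanSpace ℝ (Fin n)) → (ℕ → EuclideanSpace ℝ (Fin n)))
    (hVSP : ∀ (u : ℕ → EuclideanSpace ℝ (Fin n)) (T : ℕ), 0 < T →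
      ∑ k ∈ Finset.range T, ⟪u k, Δ u k⟫ ≥
        m * L / (m + L) * ∑ k ∈ Finset.range T, ‖u k‖ ^ 2 +
        1 / (m + L) * ∑ k ∈ Finset.range T, ‖Δ u k‖ ^ 2) :
    (m * L / (m + L)) / (1 - 2 * (m * L / (m + L)) * D) > 0 ∧
    (1 / (m + L) - D + (m * L / (m + L)) * D ^ 2) /
        (1 - 2 * (m * L / (m + L)) * D) > 0 ∧
    ∀ (ubar u y : ℕ → EuclideanSpace ℝ (Fin n)),
      y = Δ u →
      (∀ k, u k = ubar k + D • y k) →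
      ∀ T : ℕ, 0 < T →
        ∑ k ∈ Finset.range T, ⟪ubar k, y k⟫ ≥
          (m * L / (m + L)) / (1 - 2 * (m * L / (m + L)) * D) *
            ∑ k ∈ Finset.range T, ‖ubar k‖ ^ 2 +
          (1 / (m + L) - D + (m * L / (m + L)) * D ^ 2) /
              (1 - 2 * (m * L / (m + L)) * D) *
            ∑ k ∈ Finset.range T, ‖y k‖ ^ 2 := by
  have hL : 0 < L := hm.trans_le hmL
  have hmLpos : 0 < m + L := by linarith
  have hDL : D * L < 1 := by
    rw [lt_div_iff₀ hL] at hD; linarith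
  have hDm : D * m < 1 := by nlinarith
  have hden : 0 < 1 - 2 * (m * L / (m + L)) * D := by
    have e : 2 * (m * L / (m + L)) * D = 2 * m * L * D / (m + L) := by ring
    rw [sub_pos, e, div_lt_one hmLpos]
    nlinarith
  have hnum : 0 < 1 / (m + L) - D + (m * L / (m + L)) * D ^ 2 := by
    have h1 : 0 < (1 - m * D) * (1 - L * D) := by nlinarith
    have : 1 / (m + L) - D + (m * L / (m + L)) * D ^ 2
        = (1 - m * D) * (1 - L * D) / (m + L) := by
      field_simp; ring
    rw [this]; positivity
  refine ⟨div_pos (by positivity) hden, div_pos hnum hden, ?_⟩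
  intro ubar u y hy hu T hT
  have key := hVSP u T hT
  rw [← hy] at key
  have hP : ∑ k ∈ Finset.range T, ⟪u k, y k⟫
      = ∑ k ∈ Finset.range T, ⟪ubar k, y k⟫
        + D * ∑ k ∈ Finset.range T, ‖y k‖ ^ 2 := by
    rw [Finset.mul_sum, ← Finset.sum_add_distrib]
    refine Finset.sum_congr rfl fun k _ => ?_
    rw [hu k, inner_add_left, real_inner_smul_left,
      real_inner_self_eq_norm_sq]
  have hU : ∑ k ∈ Finset.range T, ‖u k‖ ^ 2
      = ∑ k ∈ Finset.range T, ‖ubar k‖ ^ 2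
        + 2 * D * ∑ k ∈ Finset.range T, ⟪ubar k, y k⟫
        + D ^ 2 * ∑ k ∈ Finset.range T, ‖y k‖ ^ 2 := by
    rw [Finset.mul_sum, Finset.mul_sum, ← Finset.sum_add_distrib,
      ← Finset.sum_add_distrib]
    refine Finset.sum_congr rfl fun k _ => ?_
    rw [hu k, @norm_add_sq_real, real_inner_smul_right, norm_smul]
    simp [abs_of_pos hD0, mul_pow]
    ring
  rw [hP, hU] at key
  have e : (m * L / (m + L)) / (1 - 2 * (m * L / (m + L)) * D) *
        ∑ k ∈ Finset.range T, ‖ubar k‖ ^ 2 +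
      (1 / (m + L) - D + (m * L / (m + L)) * D ^ 2) /
          (1 - 2 * (m * L / (m + L)) * D) *
        ∑ k ∈ Finset.range T, ‖y k‖ ^ 2
      = ((m * L / (m + L)) * ∑ k ∈ Finset.range T, ‖ubar k‖ ^ 2 +
         (1 / (m + L) - D + (m * L / (m + L)) * D ^ 2) *
          ∑ k ∈ Finset.range T, ‖y k‖ ^ 2) /
        (1 - 2 * (m * L / (m + L)) * D) := by ring
  rw [ge_iff_le, e, div_le_iff₀ hden]
  nlinarith [key]
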